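/- Let A' = {z ∈ ℂ : 1/2 ≤ |z| ≤ √(9/10)} and let ε = 1/1000. Let φ : [0,1] → A' be a path and let g : ℂ → ℂ be a map with sup_{x} |g(x) − x| < ε such that g∘φ maps into A'. Let ω_φ and ω_{gφ} be the continuous argument lifts of φ and g∘φ with ω_φ(0), ω_{gφ}(0) ∈ [0,1). Then |ω_{gφ}(t) − ω_φ(t)| < 3/2 for all t ∈ [0,1]; in particular |w(φ) − w(g∘φ)| < 3. -/

import Mathlib

open Real Set

/-- Stability of winding under perturbations smaller than `ε = 1/1000`: if `φ` is a path
in the annulus `A' = {z : 1/2 ≤ |z| ≤ √(9/10)}`, `g : ℂ → ℂ` moves every point by less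
than `1/1000`, `g ∘ φ` also maps into `A'`, and `ω, ω'` are the continuous argument lifts
of `φ` and `g ∘ φ` with `ω 0, ω' 0 ∈ [0,1)`, then `|ω' t - ω t| < 3/2` for all `t`;
in particular, the winding numbers satisfy `|w(φ) - w(g∘φ)| < 3`. -/
theorem winding_stable_under_small_perturbation
    (A' : Set ℂ)
    (hA' : A' = {z : ℂ | 1/2 ≤ ‖z‖ ∧ ‖z‖ ≤ Real.sqrt (9/10)})
    (φ : ℝ → ℂ) (hφ : ContinuousOn φ (Icc 0 1)) (hφA : MapsTo φ (Icc 0 1) A')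
    (g : ℂ → ℂ) (hg : ∀ x : ℂ, ‖g x - x‖ < 1/1000)
    (hgφA : MapsTo (g ∘ φ) (Icc 0 1) A')
    (ω ω' : ℝ → ℝ)
    (hωc : ContinuousOn ω (Icc 0 1)) (hω'c : ContinuousOn ω' (Icc 0 1))
    (hω : ∀ t ∈ Icc (0:ℝ) 1,
      Complex.exp (2 * π * Complex.I * ω t) = φ t / (‖φ t‖ : ℂ))
    (hω' : ∀ t ∈ Icc (0:ℝ) 1,
      Complex.exp (2 * π * Complex.I * ω' t) = g (φ t) / (‖g (φ t)‖ : ℂ))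
    (hω0 : ω 0 ∈ Ico (0:ℝ) 1) (hω'0 : ω' 0 ∈ Ico (0:ℝ) 1) :
    (∀ t ∈ Icc (0:ℝ) 1, |ω' t - ω t| < 3/2) ∧
      |(ω 1 - ω 0) - (ω' 1 - ω' 0)| < 3 := by
  have hmemφ : ∀ t ∈ Icc (0:ℝ) 1, 1/2 ≤ ‖φ t‖ := by
    intro t ht
    have := hφA ht
    rw [hA'] at this
    exact this.1
  have hmemg : ∀ t ∈ Icc (0:ℝ) 1, 1/2 ≤ ‖g (φ t)‖ := by
    intro t ht
    have := hgφA ht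
    rw [hA'] at this
    exact this.1
  have hhc : ContinuousOn (fun t => ω' t - ω t) (Icc 0 1) := hω'c.sub hωc
  -- the difference never hits a half-integer
  have key : ∀ t ∈ Icc (0:ℝ) 1, ∀ n : ℤ, ω' t - ω t ≠ n + 1/2 := by
    intro t ht n hEq
    have ha := hmemφ t ht
    have hb := hmemg t ht
    have hra : (0:ℝ) < ‖φ t‖ := by linarith
    have hrb : (0:ℝ) < ‖g (φ t)‖ := by linarith
    have hra' : ((‖φ t‖ : ℝ) : ℂ) ≠ 0 := by
      exact_mod_cast ne_of_gt hra
    have hrb' : ((‖g (φ t)‖ : ℝ) : ℂ) ≠ 0 := by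
      exact_mod_cast ne_of_gt hrb
    have e1 : Complex.exp (2 * π * Complex.I * ω' t)
        = - Complex.exp (2 * π * Complex.I * ω t) := by
      have hcast : ((ω' t : ℝ) : ℂ) = (ω t : ℂ) + (n : ℂ) + 1/2 := by
        have h1 : ω' t = ω t + (n : ℝ) + 1/2 := by linarith
        rw [h1]; push_cast; ring
      rw [hcast, show (2 * (π:ℂ) * Complex.I * ((ω t : ℂ) + (n:ℂ) + 1/2))
        = 2 * π * Complex.I * ω t + (n:ℂ) * (2 * π * Complex.I) + π * Complex.I by ring,
        Complex.exp_add, Complex.exp_add, Complex.exp_int_mul_two_pi_mul_I,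
        Complex.exp_pi_mul_I]
      ring
    have e2 : g (φ t) / (‖g (φ t)‖ : ℂ)
        = - (φ t / (‖φ t‖ : ℂ)) := by
      rw [← hω' t ht, ← hω t ht, e1]
    field_simp at e2
    set c : ℝ := ‖g (φ t)‖ / ‖φ t‖ with hcdef
    have hc0 : 0 ≤ c := le_of_lt (div_pos hrb hra)
    have hcc : ((c:ℝ):ℂ) = (‖g (φ t)‖ : ℂ) / (‖φ t‖ : ℂ) := by
      rw [hcdef]; push_cast; ring
    have e3 : g (φ t) = (-(c:ℂ)) * φ t := by
      rw [hcc, show -((‖g (φ t)‖:ℂ)/(‖φ t‖:ℂ)) * φ t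
          = -((‖g (φ t)‖:ℂ) * φ t) / (‖φ t‖:ℂ) by ring,
        ← e2, mul_div_cancel_right₀ _ hra']
    have e4 : ‖g (φ t) - φ t‖ = (c + 1) * ‖φ t‖ := by
      rw [e3, show (-(c:ℂ)) * φ t - φ t = -((c:ℂ) + 1) * φ t by ring, norm_mul]
      congr 1
      rw [show (-((c:ℂ) + 1)) = (((-(c+1) : ℝ)) : ℂ) by push_cast; ring,
        Complex.norm_real, Real.norm_eq_abs, abs_of_nonpos (by linarith)]
      ring
    have hcmul : c * ‖φ t‖ = ‖g (φ t)‖ := by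
      rw [hcdef]; field_simp
    have hge : (1:ℝ) ≤ ‖g (φ t) - φ t‖ := by
      rw [e4]
      nlinarith
    have := hg (φ t)
    linarith
  -- main bound
  have h0lb : -1 < ω' 0 - ω 0 := by linarith [hω'0.1, hω0.2]
  have h0ub : ω' 0 - ω 0 < 1 := by linarith [hω'0.2, hω0.1]
  have main : ∀ t ∈ Icc (0:ℝ) 1, |ω' t - ω t| < 3/2 := by
    intro t ht
    by_contra hcon
    push_neg at hcon
    have hsub : uIcc (0:ℝ) t ⊆ Icc (0:ℝ) 1 := by
      rw [uIcc_of_le ht.1]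
      exact Icc_subset_Icc le_rfl ht.2
    have hcont : ContinuousOn (fun t => ω' t - ω t) (uIcc 0 t) := hhc.mono hsub
    rcases le_abs.mp hcon with hpos | hneg
    · have hmem : (3/2 : ℝ) ∈ uIcc (ω' 0 - ω 0) (ω' t - ω t) := by
        rw [uIcc_of_le (by linarith)]
        exact ⟨by linarith, hpos⟩
      obtain ⟨s, hs, hval⟩ := intermediate_value_uIcc hcont hmem
      exact key s (hsub hs) 1 (by push_cast; linarith [show ω' s - ω s = 3/2 from hval])
    · have hmem : (-(3/2) : ℝ) ∈ uIcc (ω' 0 - ω 0) (ω' t - ω t) := by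
        rw [uIcc_of_ge (by linarith)]
        exact ⟨by linarith, by linarith⟩
      obtain ⟨s, hs, hval⟩ := intermediate_value_uIcc hcont hmem
      exact key s (hsub hs) (-2) (by push_cast; linarith [show ω' s - ω s = -(3/2) from hval])
  refine ⟨main, ?_⟩
  have h0 := main 0 (by norm_num)
  have h1 := main 1 (by norm_num)
  rw [show (ω 1 - ω 0) - (ω' 1 - ω' 0) = -(ω' 1 - ω 1) + (ω' 0 - ω 0) by ring]
  calc |(-(ω' 1 - ω 1) + (ω' 0 - ω 0))| ≤ |(-(ω' 1 - ω 1))| + |ω' 0 - ω 0| := abs_add_le _ _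
    _ = |ω' 1 - ω 1| + |ω' 0 - ω 0| := by rw [abs_neg]
    _ < 3 := by linarith
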